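/- For every integer k ≥ 3, the real symmetric 3×3 matrix A(k) with entries A₁₁ = 32k² − 96k + 96, A₁₂ = A₂₁ = 0, A₁₃ = A₃₁ = 4k² − 16k, A₂₂ = 10k⁴ − 30k³ − 8k² + 96k − 96, A₂₃ = A₃₂ = −10k⁴ + 35k³ − 4k² − 80k + 96, A₃₃ = 10k⁴ − 40k³ + 24k² + 64k − 96 is positive definite; consequently, for every real 3×6 matrix B, the 6×6 matrix (3/(2k⁴))·Bᵀ A(k) B is positive semidefinite. -/

import Mathlib

open Matrix

/-- The matrix `A(k)` from the flag-algebra certificate. -/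
noncomputable def Amat (k : ℕ) : Matrix (Fin 3) (Fin 3) ℝ :=
  !![32*(k:ℝ)^2 - 96*(k:ℝ) + 96, 0, 4*(k:ℝ)^2 - 16*(k:ℝ);
     0, 10*(k:ℝ)^4 - 30*(k:ℝ)^3 - 8*(k:ℝ)^2 + 96*(k:ℝ) - 96,
       -10*(k:ℝ)^4 + 35*(k:ℝ)^3 - 4*(k:ℝ)^2 - 80*(k:ℝ) + 96;
     4*(k:ℝ)^2 - 16*(k:ℝ), -10*(k:ℝ)^4 + 35*(k:ℝ)^3 - 4*(k:ℝ)^2 - 80*(k:ℝ) + 96,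
       10*(k:ℝ)^4 - 40*(k:ℝ)^3 + 24*(k:ℝ)^2 + 64*(k:ℝ) - 96]

private lemma posSemidef_smul_aux {n : Type*} [Fintype n] {M : Matrix n n ℝ}
    (hM : M.PosSemidef) {c : ℝ} (hc : 0 ≤ c) : (c • M).PosSemidef := by
  rw [posSemidef_iff_dotProduct_mulVec] at hM ⊢
  refine ⟨?_, ?_⟩
  · unfold Matrix.IsHermitian
    rw [conjTranspose_smul, hM.1.eq]
    norm_num
  · intro x
    rw [smul_mulVec, dotProduct_smul]
    exact mul_nonneg hc (hM.2 x)

/-- For every `k ≥ 3` the matrix `A(k)` is positive definite and, consequently, for every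
real `3×6` matrix `B`, the matrix `(3/(2k⁴))·Bᵀ A(k) B` is positive semidefinite. -/
theorem Amat_posDef (k : ℕ) (hk : 3 ≤ k) :
    (Amat k).PosDef ∧
      ∀ B : Matrix (Fin 3) (Fin 6) ℝ, ((3/(2*(k:ℝ)^4)) • (Bᵀ * Amat k * B)).PosSemidef := by
  have ht : (3:ℝ) ≤ (k:ℝ) := by exact_mod_cast hk
  set t : ℝ := (k:ℝ) with htdef
  have hs : (0:ℝ) ≤ t - 3 := by linarith
  have ha : 0 < 32*t^2 - 96*t + 96 := by nlinarith [sq_nonneg (t-3)]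
  have hb : 0 < 10*t^4 - 30*t^3 - 8*t^2 + 96*t - 96 := by
    nlinarith [pow_nonneg hs 2, pow_nonneg hs 3, pow_nonneg hs 4]
  have hD : 0 < (32*t^2 - 96*t + 96) * (10*t^4 - 30*t^3 - 8*t^2 + 96*t - 96)
        * (10*t^4 - 40*t^3 + 24*t^2 + 64*t - 96)
      - (32*t^2 - 96*t + 96) * (-10*t^4 + 35*t^3 - 4*t^2 - 80*t + 96)^2
      - (10*t^4 - 30*t^3 - 8*t^2 + 96*t - 96) * (4*t^2 - 16*t)^2 := by
    nlinarith [pow_nonneg hs 2, pow_nonneg hs 3, pow_nonneg hs 4, pow_nonneg hs 5,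
      pow_nonneg hs 6, pow_nonneg hs 7, pow_nonneg hs 8]
  have hpd : (Amat k).PosDef := by
    rw [posDef_iff_dotProduct_mulVec]
    constructor
    · unfold Matrix.IsHermitian
      ext i j
      fin_cases i <;> fin_cases j <;> simp [Amat]
    · intro x hx
      have hx' : x 0 ≠ 0 ∨ x 1 ≠ 0 ∨ x 2 ≠ 0 := by
        by_contra h
        push_neg at h
        apply hx
        funext i
        fin_cases i <;> simp [h.1, h.2.1, h.2.2]
      have hQ : dotProduct (star x) ((Amat k) *ᵥ x)
          = (32*t^2 - 96*t + 96) * (x 0)^2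
            + 2*(4*t^2 - 16*t) * (x 0) * (x 2)
            + (10*t^4 - 30*t^3 - 8*t^2 + 96*t - 96) * (x 1)^2
            + 2*(-10*t^4 + 35*t^3 - 4*t^2 - 80*t + 96) * (x 1) * (x 2)
            + (10*t^4 - 40*t^3 + 24*t^2 + 64*t - 96) * (x 2)^2 := by
        simp [Amat, dotProduct, mulVec, Fin.sum_univ_three, ← htdef]
        ring
      rw [hQ]
      rcases eq_or_ne (x 2) 0 with h2 | h2
      · rw [h2]
        rcases hx' with h0 | h1 | h2' 
        · have h0sq : 0 < (x 0)^2 := (sq_abs (x 0)) ▸ pow_pos (abs_pos.mpr h0) 2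
          nlinarith [mul_pos ha h0sq, mul_nonneg hb.le (sq_nonneg (x 1))]
        · have h1sq : 0 < (x 1)^2 := (sq_abs (x 1)) ▸ pow_pos (abs_pos.mpr h1) 2
          nlinarith [mul_pos hb h1sq, mul_nonneg ha.le (sq_nonneg (x 0))]
        · exact absurd h2 h2'
      · have key : ((32*t^2 - 96*t + 96) * (10*t^4 - 30*t^3 - 8*t^2 + 96*t - 96)) *
            ((32*t^2 - 96*t + 96) * (x 0)^2
            + 2*(4*t^2 - 16*t) * (x 0) * (x 2)
            + (10*t^4 - 30*t^3 - 8*t^2 + 96*t - 96) * (x 1)^2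
            + 2*(-10*t^4 + 35*t^3 - 4*t^2 - 80*t + 96) * (x 1) * (x 2)
            + (10*t^4 - 40*t^3 + 24*t^2 + 64*t - 96) * (x 2)^2)
          = (10*t^4 - 30*t^3 - 8*t^2 + 96*t - 96) *
              ((32*t^2 - 96*t + 96) * x 0 + (4*t^2 - 16*t) * x 2)^2
            + (32*t^2 - 96*t + 96) *
              ((10*t^4 - 30*t^3 - 8*t^2 + 96*t - 96) * x 1
                + (-10*t^4 + 35*t^3 - 4*t^2 - 80*t + 96) * x 2)^2
            + ((32*t^2 - 96*t + 96) * (10*t^4 - 30*t^3 - 8*t^2 + 96*t - 96)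
                * (10*t^4 - 40*t^3 + 24*t^2 + 64*t - 96)
              - (32*t^2 - 96*t + 96) * (-10*t^4 + 35*t^3 - 4*t^2 - 80*t + 96)^2
              - (10*t^4 - 30*t^3 - 8*t^2 + 96*t - 96) * (4*t^2 - 16*t)^2) * (x 2)^2 := by
          ring
        have hz2 : 0 < (x 2)^2 := pow_pos (abs_pos.mpr h2) 2 |>.trans_eq (sq_abs (x 2))
        have hpos : 0 < ((32*t^2 - 96*t + 96) * (10*t^4 - 30*t^3 - 8*t^2 + 96*t - 96)) *
            ((32*t^2 - 96*t + 96) * (x 0)^2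
            + 2*(4*t^2 - 16*t) * (x 0) * (x 2)
            + (10*t^4 - 30*t^3 - 8*t^2 + 96*t - 96) * (x 1)^2
            + 2*(-10*t^4 + 35*t^3 - 4*t^2 - 80*t + 96) * (x 1) * (x 2)
            + (10*t^4 - 40*t^3 + 24*t^2 + 64*t - 96) * (x 2)^2) := by
          rw [key]
          have h1 := mul_nonneg hb.le (sq_nonneg ((32*t^2 - 96*t + 96) * x 0 + (4*t^2 - 16*t) * x 2))
          have h2' := mul_nonneg ha.le (sq_nonneg ((10*t^4 - 30*t^3 - 8*t^2 + 96*t - 96) * x 1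
                + (-10*t^4 + 35*t^3 - 4*t^2 - 80*t + 96) * x 2))
          have h3 := mul_pos hD hz2
          linarith
        have hab : 0 < (32*t^2 - 96*t + 96) * (10*t^4 - 30*t^3 - 8*t^2 + 96*t - 96) :=
          mul_pos ha hb
        rcases mul_pos_iff.mp hpos with ⟨_, h⟩ | ⟨h, _⟩
        · exact h
        · exact absurd hab (not_lt.mpr h.le)
  refine ⟨hpd, fun B => ?_⟩
  have hc : (0:ℝ) ≤ 3/(2*t^4) := by positivity
  have hB : (Bᴴ * Amat k * B).PosSemidef := hpd.posSemidef.conjTranspose_mul_mul_same B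
  rw [conjTranspose_eq_transpose_of_trivial] at hB
  exact posSemidef_smul_aux hB hc
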